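/- In the Gasca–Lopez-Carmona–Ramirez generalization, if card(⋃_{k=1}^q J_k) < t+q, then det(B) = 0, where B is the q×q matrix with entries b_{ik} = M[1,...,t,t+i; J_k]. -/

import Mathlib

open Matrix Finset

/-- Multilinearity of the determinant in one row, summed form. -/
lemma det_updateRow_sum'' {K : Type*} [Field K] {n : Type*} [DecidableEq n] [Fintype n]
    {ι : Type*} [DecidableEq ι] (A : Matrix n n K) (j : n) (s : Finset ι) (g : ι → K)
    (v : ι → n → K) :
    (A.updateRow j (∑ i ∈ s, g i • v i)).det = ∑ i ∈ s, g i * (A.updateRow j (v i)).det := by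
  induction s using Finset.induction_on with
  | empty =>
      rw [Finset.sum_empty, Finset.sum_empty]
      exact Matrix.det_eq_zero_of_row_eq_zero j (fun l => by simp)
  | @insert a s ha ih =>
      rw [Finset.sum_insert ha, Matrix.det_updateRow_add, Matrix.det_updateRow_smul,
        ih, Finset.sum_insert ha]

/-- Gasca–Lopez-Carmona–Ramirez generalization: if `card(⋃ J_k) < t + q`
then `det B = 0`, where `b_{ik} = M[1,…,t,t+i ; J_k]`. -/
theorem glr_vanishing {K : Type*} [Field K] {t q : ℕ} (ht : 0 < t) (hq : 0 < q)
    (M : Matrix (Fin (t + q)) (Fin (t + q)) K)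
    (J : Fin q → Fin (t + 1) → Fin (t + q))
    (hmono : ∀ k, StrictMono (J k))
    (hinter : ∀ k : Fin q, ∀ hk : (k : ℕ) + 1 < q,
      ((Finset.univ.image (J k)) ∩ (Finset.univ.image (J ⟨(k : ℕ) + 1, hk⟩))).card = t)
    (hcard : ((Finset.univ : Finset (Fin q)).biUnion
        (fun k => Finset.univ.image (J k))).card < t + q) :
    (Matrix.of (fun i k : Fin q =>
      (M.submatrix
        (Fin.snoc (Fin.castLE (by omega)) (⟨t + i, by have := i.isLt; omega⟩ : Fin (t + q)))
        (J k)).det)).det = 0 := by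
  classical
  set U : Finset (Fin (t + q)) :=
    ((Finset.univ : Finset (Fin q)).biUnion (fun k => Finset.univ.image (J k))) with hUdef
  -- the restricted rows are linearly dependent
  have hnotli : ¬ LinearIndependent K (fun j : Fin (t + q) => (fun u : U => M j u.1)) := by
    intro h
    have h1 := h.fintype_card_le_finrank
    rw [Module.finrank_pi] at h1
    simp only [Fintype.card_fin, Fintype.card_coe] at h1
    omega
  obtain ⟨g, hg, j0, hj0⟩ := Fintype.not_linearIndependent_iff.mp hnotli
  have hgu : ∀ u ∈ U, ∑ j, g j * M j u = 0 := by
    intro u hu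
    have := congrFun hg ⟨u, hu⟩
    simpa [Finset.sum_apply] using this
  have hJU : ∀ k l, J k l ∈ U := by
    intro k l
    simp only [hUdef, Finset.mem_biUnion, Finset.mem_image]
    exact ⟨k, Finset.mem_univ k, l, Finset.mem_univ l, rfl⟩
  -- D k j : determinant with last row = row j of M
  set D : Fin q → Fin (t + q) → K := fun k j =>
    (M.submatrix (Fin.snoc (Fin.castLE (by omega)) j) (J k)).det with hD
  -- rewrite each such determinant via updateRow of a fixed base matrix
  have hDup : ∀ k (j : Fin (t + q)),
      D k j = ((M.submatrix (Fin.snoc (Fin.castLE (by omega)) j0) (J k)).updateRow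
        (Fin.last t) (fun l => M j (J k l))).det := by
    intro k j
    have hm : (M.submatrix (Fin.snoc (Fin.castLE (by omega)) j) (J k)) =
        ((M.submatrix (Fin.snoc (Fin.castLE (by omega)) j0) (J k)).updateRow
          (Fin.last t) (fun l => M j (J k l))) := by
      ext r l
      refine Fin.lastCases ?_ ?_ r
      · simp [Matrix.updateRow_self]
      · intro r
        simp [Matrix.updateRow_ne (Fin.castSucc_lt_last r).ne, Fin.snoc_castSucc]
    simp only [hD]
    rw [hm]
  -- the key linear relation : ∑ j, g j * D k j = 0
  have hkey : ∀ k, ∑ j, g j * D k j = 0 := by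
    intro k
    have : ∑ j, g j * D k j =
        (((M.submatrix (Fin.snoc (Fin.castLE (by omega)) j0) (J k))).updateRow
          (Fin.last t) (∑ j, g j • (fun l => M j (J k l)))).det := by
      rw [det_updateRow_sum'']
      exact Finset.sum_congr rfl fun j _ => by rw [hDup k j]
    rw [this]
    have hz : (∑ j, g j • (fun l => M j (J k l))) = (0 : Fin (t + 1) → K) := by
      funext l
      simp only [Finset.sum_apply, Pi.smul_apply, smul_eq_mul, Pi.zero_apply]
      exact hgu _ (hJU k l)
    rw [hz]
    exact Matrix.det_eq_zero_of_row_eq_zero (Fin.last t) (by simp)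
  -- determinants with last row a repeated early row vanish
  have hDcast : ∀ k (r : Fin t), D k (Fin.castAdd q r) = 0 := by
    intro k r
    refine Matrix.det_zero_of_row_eq (i := (Fin.castSucc r)) (j := Fin.last t)
      (Fin.castSucc_lt_last r).ne ?_
    funext l
    simp only [Matrix.submatrix_apply, Fin.snoc_castSucc, Fin.snoc_last]
    first
    | rfl
    | (congr 1; exact Fin.ext rfl)
  -- hence only the last q rows contribute
  have hsum : ∀ k, ∑ i : Fin q, g (Fin.natAdd t i) * D k (Fin.natAdd t i) = 0 := by
    intro k
    have := hkey k
    rw [Fin.sum_univ_add] at this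
    simpa [hDcast k] using this
  -- B entries in terms of D
  have hB : ∀ (i k : Fin q),
      (Matrix.of (fun i k : Fin q =>
        (M.submatrix
          (Fin.snoc (Fin.castLE (by omega)) (⟨t + i, by have := i.isLt; omega⟩ : Fin (t + q)))
          (J k)).det)) i k = D k (Fin.natAdd t i) := by
    intro i k
    simp only [Matrix.of_apply, hD]
    congr 1
  by_cases hcase : ∃ i : Fin q, g (Fin.natAdd t i) ≠ 0
  · obtain ⟨i0, hi0⟩ := hcase
    rw [← Matrix.exists_vecMul_eq_zero_iff]
    refine ⟨fun i => g (Fin.natAdd t i), ?_, ?_⟩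
    · intro h0
      exact hi0 (congrFun h0 i0)
    · funext k
      simp only [Matrix.vecMul, dotProduct, Pi.zero_apply]
      calc ∑ i, g (Fin.natAdd t i) * _ = ∑ i : Fin q, g (Fin.natAdd t i) * D k (Fin.natAdd t i) :=
            Finset.sum_congr rfl fun i _ => by rw [hB i k]
        _ = 0 := hsum k
  · -- all last coefficients vanish; then the first rows are dependent and every entry is zero
    push_neg at hcase
    -- j0 is among the first t indices
    have hj0t : (j0 : ℕ) < t := by
      by_contra hge
      push_neg at hge
      have hlt : (j0 : ℕ) - t < q := by have := j0.isLt; omega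
      have : j0 = Fin.natAdd t ⟨(j0 : ℕ) - t, hlt⟩ := by
        apply Fin.ext
        simp only [Fin.natAdd]
        omega
      rw [this] at hj0
      exact hj0 (hcase _)
    have hzero : ∀ i k : Fin q,
        (M.submatrix
          (Fin.snoc (Fin.castLE (by omega)) (⟨t + i, by have := i.isLt; omega⟩ : Fin (t + q)))
          (J k)).det = 0 := by
      intro i k
      rw [← Matrix.exists_vecMul_eq_zero_iff]
      refine ⟨Fin.snoc (fun r : Fin t => g (Fin.castAdd q r)) 0, ?_, ?_⟩
      · intro h0
        have := congrFun h0 (Fin.castSucc ⟨(j0 : ℕ), hj0t⟩)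
        rw [Fin.snoc_castSucc] at this
        apply hj0
        have hjj : Fin.castAdd q ⟨(j0 : ℕ), hj0t⟩ = j0 := Fin.ext rfl
        rw [hjj] at this
        exact this
      · funext l
        simp only [Matrix.vecMul, dotProduct, Pi.zero_apply]
        rw [Fin.sum_univ_castSucc]
        simp only [Fin.snoc_castSucc, Fin.snoc_last, zero_mul, add_zero,
          Matrix.submatrix_apply]
        have hfull := hgu _ (hJU k l)
        rw [Fin.sum_univ_add] at hfull
        have hlast : ∑ i' : Fin q, g (Fin.natAdd t i') * M (Fin.natAdd t i') (J k l) = 0 := by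
          refine Finset.sum_eq_zero fun i' _ => by rw [hcase i', zero_mul]
        rw [hlast, add_zero] at hfull
        first
        | exact hfull
        | (convert hfull using 3 with r; exact Fin.ext rfl)
    have hBzero : (Matrix.of (fun i k : Fin q =>
        (M.submatrix
          (Fin.snoc (Fin.castLE (by omega)) (⟨t + i, by have := i.isLt; omega⟩ : Fin (t + q)))
          (J k)).det)) = 0 := by
      ext i k
      simpa using hzero i k
    rw [hBzero]
    haveI : Nonempty (Fin q) := ⟨⟨0, hq⟩⟩
    exact Matrix.det_zero
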